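/- There exists a family of unranked trees (s_n)_{n≥1} such that |dag(s_n)| = 3n(n+1)/2 and |hdag(s_n)| = 3n, and consequently |dag(s_n)| > (1/6)·|hdag(s_n)|². -/

import Mathlib

inductive UTree (σ : Type) : Type where
  | node : σ → List (UTree σ) → UTree σ

namespace UTree
variable {σ : Type}

noncomputable instance : DecidableEq (UTree σ) := Classical.decEq _

def children : UTree σ → List (UTree σ)
  | node _ cs => cs

def subs : UTree σ → List (UTree σ)
  | node a cs => node a cs :: (cs.attach.map (fun ⟨c, _⟩ => subs c)).flatten

def sibs : UTree σ → List (List (UTree σ))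
  | node _ cs => cs.tails.filter (fun l => !l.isEmpty)
      ++ (cs.attach.map (fun ⟨c, _⟩ => sibs c)).flatten

def sibseqs (t : UTree σ) : List (List (UTree σ)) := [t] :: sibs t

def edges : UTree σ → ℕ
  | node _ cs => cs.length + (cs.attach.map (fun ⟨c, _⟩ => edges c)).sum

def rootDeg : UTree σ → ℕ
  | node _ cs => cs.length

def nodes : UTree σ → ℕ
  | node _ cs => 1 + (cs.attach.map (fun ⟨c, _⟩ => nodes c)).sum

end UTree

/-- The edge size of the minimal dag of `t`. -/
noncomputable def UTree.dagEdges {σ : Type} (t : UTree σ) : ℕ :=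
  ((UTree.subs t).dedup.map UTree.rootDeg).sum

/-- The edge size of the hybrid dag of `t`: the number of distinct non-leaf subtrees
(nonterminals of the dag grammar) plus the number of distinct sibling sequences of
length at least 2 (the shared suffixes of child sequences in binary encoding). -/
noncomputable def UTree.hdagEdges {σ : Type} (t : UTree σ) : ℕ :=
  ((UTree.subs t).filter (fun s => UTree.rootDeg s ≠ 0)).dedup.length +
    ((UTree.sibseqs t).filter (fun w => 2 ≤ w.length)).dedup.length

open UTree

lemma mem_subs_node {σ : Type} (a : σ) (cs : List (UTree σ)) (x : UTree σ) :
    x ∈ UTree.subs (.node a cs) ↔ x = .node a cs ∨ ∃ c ∈ cs, x ∈ UTree.subs c := by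
  simp [UTree.subs, List.mem_flatten, List.mem_map, List.mem_attach]

lemma mem_sibs_node {σ : Type} (a : σ) (cs : List (UTree σ)) (x : List (UTree σ)) :
    x ∈ UTree.sibs (.node a cs) ↔ (x <:+ cs ∧ x ≠ []) ∨ ∃ c ∈ cs, x ∈ UTree.sibs c := by
  simp only [UTree.sibs, List.mem_append, List.mem_filter, List.mem_tails,
    List.mem_flatten, List.mem_map, List.mem_attach, Bool.not_eq_true',
    List.isEmpty_eq_false_iff, true_and, Subtype.exists]
  aesop

def lf : UTree ℕ := .node 0 []

def B (n : ℕ) : ℕ → UTree ℕ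
  | 0 => .node 1 (List.replicate n lf)
  | k+1 => .node 1 (B n k :: (B n k).children)

def C (n k : ℕ) : List (UTree ℕ) := (B n k).children

lemma C_zero (n : ℕ) : C n 0 = List.replicate n lf := rfl
lemma C_succ (n k : ℕ) : C n (k+1) = B n k :: C n k := rfl
lemma B_eq (n k : ℕ) : B n k = .node 1 (C n k) := by cases k <;> rfl

lemma C_length (n k : ℕ) : (C n k).length = k + n := by
  induction k with
  | zero => simp [C_zero]
  | succ k ih => simp [C_succ, ih]; omega

lemma rootDeg_B (n k : ℕ) : rootDeg (B n k) = k + n := by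
  rw [B_eq]; simpa [rootDeg] using C_length n k

lemma rootDeg_lf : rootDeg lf = 0 := rfl

lemma B_ne_lf {n k : ℕ} (hn : 1 ≤ n) : B n k ≠ lf := by
  intro h
  have := congrArg rootDeg h
  rw [rootDeg_B, rootDeg_lf] at this; omega

lemma B_inj {n : ℕ} {j k : ℕ} (h : B n j = B n k) : j = k := by
  have := congrArg rootDeg h
  rw [rootDeg_B, rootDeg_B] at this; omega

lemma mem_C {n k : ℕ} (x : UTree ℕ) (hn : 1 ≤ n) :
    x ∈ C n k ↔ x = lf ∨ ∃ j < k, x = B n j := by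
  induction k with
  | zero => simp [C_zero, List.mem_replicate]; omega
  | succ k ih =>
    rw [C_succ]
    simp only [List.mem_cons, ih]
    constructor
    · rintro (rfl | rfl | ⟨j, hj, rfl⟩)
      · exact Or.inr ⟨k, by omega, rfl⟩
      · exact Or.inl rfl
      · exact Or.inr ⟨j, by omega, rfl⟩
    · rintro (rfl | ⟨j, hj, rfl⟩)
      · exact Or.inr (Or.inl rfl)
      · rcases Nat.lt_succ_iff_lt_or_eq.mp hj with h | rfl
        · exact Or.inr (Or.inr ⟨j, h, rfl⟩)
        · exact Or.inl rfl

lemma subs_lf (x : UTree ℕ) : x ∈ UTree.subs lf ↔ x = lf := by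
  simp [lf, mem_subs_node]

lemma sibs_lf (x : List (UTree ℕ)) : ¬ x ∈ UTree.sibs lf := by
  simp [lf, mem_sibs_node]

lemma mem_subs_B {n : ℕ} (hn : 1 ≤ n) (k : ℕ) (x : UTree ℕ) :
    x ∈ UTree.subs (B n k) ↔ x = lf ∨ ∃ j ≤ k, x = B n j := by
  induction k using Nat.strong_induction_on with
  | _ k ih =>
    rw [B_eq, mem_subs_node, ← B_eq]
    constructor
    · rintro (rfl | ⟨c, hc, hx⟩)
      · exact Or.inr ⟨k, le_refl _, rfl⟩
      · rcases (mem_C c hn).mp hc with rfl | ⟨j, hj, rfl⟩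
        · exact Or.inl ((subs_lf x).mp hx)
        · rcases (ih j hj).mp hx with rfl | ⟨i, hi, rfl⟩
          · exact Or.inl rfl
          · exact Or.inr ⟨i, by omega, rfl⟩
    · rintro (rfl | ⟨j, hj, rfl⟩)
      · refine Or.inr ⟨lf, (mem_C lf hn).mpr (Or.inl rfl) , (subs_lf lf).mpr rfl⟩
      · rcases Nat.lt_or_ge j k with h | h
        · refine Or.inr ⟨B n j, (mem_C _ hn).mpr (Or.inr ⟨j, h, rfl⟩),
            (ih j h).mpr (Or.inr ⟨j, le_refl _, rfl⟩)⟩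
        · have : j = k := le_antisymm hj h
          subst this; exact Or.inl rfl

lemma suffix_replicate {x : List (UTree ℕ)} {n : ℕ} :
    x <:+ List.replicate n lf ↔ ∃ j ≤ n, x = List.replicate j lf := by
  induction n with
  | zero => simp
  | succ n ih =>
    rw [List.replicate_succ, List.suffix_cons_iff, ih]
    constructor
    · rintro (rfl | ⟨j, hj, rfl⟩)
      · exact ⟨n+1, le_refl _, by rw [List.replicate_succ]⟩
      · exact ⟨j, by omega, rfl⟩
    · rintro ⟨j, hj, rfl⟩
      rcases Nat.lt_or_ge j (n+1) with h | h
      · exact Or.inr ⟨j, by omega, rfl⟩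
      · have : j = n + 1 := by omega
        subst this; exact Or.inl (by rw [List.replicate_succ])

lemma suffix_C {x : List (UTree ℕ)} {n k : ℕ} :
    x <:+ C n k ↔ (∃ j, 1 ≤ j ∧ j ≤ k ∧ x = C n j) ∨ ∃ j ≤ n, x = List.replicate j lf := by
  induction k with
  | zero =>
    rw [C_zero, suffix_replicate]
    constructor
    · exact fun h => Or.inr h
    · rintro (⟨j, h1, h2, rfl⟩ | h)
      · omega
      · exact h
  | succ k ih =>
    rw [C_succ, List.suffix_cons_iff, ← C_succ, ih]
    constructor
    · rintro (rfl | ⟨j, h1, h2, rfl⟩ | h)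
      · exact Or.inl ⟨k+1, by omega, le_refl _, rfl⟩
      · exact Or.inl ⟨j, h1, by omega, rfl⟩
      · exact Or.inr h
    · rintro (⟨j, h1, h2, rfl⟩ | h)
      · rcases Nat.lt_or_ge j (k+1) with h | h
        · exact Or.inr (Or.inl ⟨j, h1, by omega, rfl⟩)
        · have : j = k + 1 := by omega
          subst this; exact Or.inl rfl
      · exact Or.inr (Or.inr h)

lemma C_ne_nil {n k : ℕ} (hn : 1 ≤ n) : C n k ≠ [] := by
  intro h
  have := congrArg List.length h
  rw [C_length] at this; simp at this; omega

lemma mem_sibs_B {n : ℕ} (hn : 1 ≤ n) (k : ℕ) (x : List (UTree ℕ)) :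
    x ∈ UTree.sibs (B n k) ↔
      (∃ j, 1 ≤ j ∧ j ≤ k ∧ x = C n j) ∨ ∃ j, 1 ≤ j ∧ j ≤ n ∧ x = List.replicate j lf := by
  induction k using Nat.strong_induction_on with
  | _ k ih =>
    rw [B_eq, mem_sibs_node]
    constructor
    · rintro (⟨hsuf, hne⟩ | ⟨c, hc, hx⟩)
      · rcases suffix_C.mp hsuf with ⟨j, h1, h2, rfl⟩ | ⟨j, hj, rfl⟩
        · exact Or.inl ⟨j, h1, h2, rfl⟩
        · refine Or.inr ⟨j, ?_, hj, rfl⟩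
          rcases Nat.eq_zero_or_pos j with rfl | h
          · simp at hne
          · exact h
      · rcases (mem_C c hn).mp hc with rfl | ⟨j, hj, rfl⟩
        · exact absurd hx (sibs_lf x)
        · rcases (ih j hj).mp hx with ⟨i, h1, h2, rfl⟩ | h
          · exact Or.inl ⟨i, h1, by omega, rfl⟩
          · exact Or.inr h
    · rintro (⟨j, h1, h2, rfl⟩ | ⟨j, h1, h2, rfl⟩)
      · exact Or.inl ⟨suffix_C.mpr (Or.inl ⟨j, h1, h2, rfl⟩), C_ne_nil hn⟩
      · refine Or.inl ⟨suffix_C.mpr (Or.inr ⟨j, h2, rfl⟩), fun h => by have := congrArg List.length h; simp at this; omega⟩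

lemma dedup_toFinset {α : Type*} [DecidableEq α] (l : List α) : l.dedup.toFinset = l.toFinset := by
  ext x; simp [List.mem_dedup]

lemma dedup_length_eq_card {α : Type*} [DecidableEq α] (l : List α) :
    l.dedup.length = l.toFinset.card := by
  rw [← dedup_toFinset, List.toFinset_card_of_nodup l.nodup_dedup]

lemma dagEdges_eq_sum {σ : Type} (t : UTree σ) :
    UTree.dagEdges t = ∑ x ∈ (UTree.subs t).toFinset, UTree.rootDeg x := by
  rw [UTree.dagEdges, ← List.sum_toFinset _ (UTree.subs t).nodup_dedup, dedup_toFinset]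

lemma subs_toFinset {n : ℕ} (hn : 1 ≤ n) :
    (UTree.subs (B n n)).toFinset = insert lf ((Finset.range (n+1)).image (B n)) := by
  ext x
  simp only [List.mem_toFinset, mem_subs_B hn, Finset.mem_insert, Finset.mem_image,
    Finset.mem_range]
  constructor
  · rintro (rfl | ⟨j, hj, rfl⟩)
    · exact Or.inl rfl
    · exact Or.inr ⟨j, by omega, rfl⟩
  · rintro (rfl | ⟨j, hj, rfl⟩)
    · exact Or.inl rfl
    · exact Or.inr ⟨j, by omega, rfl⟩

lemma dag_value {n : ℕ} (hn : 1 ≤ n) : 2 * UTree.dagEdges (B n n) = 3 * n * (n + 1) := by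
  rw [dagEdges_eq_sum, subs_toFinset hn]
  rw [Finset.sum_insert (by
    simp only [Finset.mem_image, Finset.mem_range, not_exists]
    exact fun j h => B_ne_lf hn h.2)]
  rw [Finset.sum_image (fun a _ b _ h => B_inj h)]
  simp only [rootDeg_lf, rootDeg_B, zero_add]
  rw [Finset.sum_add_distrib, Finset.sum_const, Finset.card_range, smul_eq_mul]
  have := Finset.sum_range_id_mul_two (n+1)
  simp only [Nat.add_sub_cancel] at this
  nlinarith [this]

lemma hdag_part1 {n : ℕ} (hn : 1 ≤ n) :
    ((UTree.subs (B n n)).filter (fun s => UTree.rootDeg s ≠ 0)).dedup.length = n + 1 := by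
  rw [dedup_length_eq_card]
  have : ((UTree.subs (B n n)).filter (fun s => UTree.rootDeg s ≠ 0)).toFinset
      = (Finset.range (n+1)).image (B n) := by
    ext x
    simp only [List.mem_toFinset, List.mem_filter, mem_subs_B hn, Finset.mem_image,
      Finset.mem_range, decide_eq_true_eq]
    constructor
    · rintro ⟨rfl | ⟨j, hj, rfl⟩, h2⟩
      · exact absurd rootDeg_lf h2
      · exact ⟨j, by omega, rfl⟩
    · rintro ⟨j, hj, rfl⟩
      exact ⟨Or.inr ⟨j, by omega, rfl⟩, by rw [rootDeg_B]; omega⟩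
  rw [this, Finset.card_image_of_injective _ (fun a b h => B_inj h), Finset.card_range]

lemma C_inj {n : ℕ} {j k : ℕ} (h : C n j = C n k) : j = k := by
  have := congrArg List.length h
  rw [C_length, C_length] at this; omega

lemma C_ne_replicate {n j i : ℕ} (hn : 1 ≤ n) : C n (j+1) ≠ List.replicate i lf := by
  intro h
  rw [C_succ] at h
  have : B n j ∈ List.replicate i lf := h ▸ List.mem_cons_self
  exact B_ne_lf hn (List.eq_of_mem_replicate this)

lemma hdag_part2 {n : ℕ} (hn : 1 ≤ n) :
    ((UTree.sibseqs (B n n)).filter (fun w => 2 ≤ w.length)).dedup.length = 2 * n - 1 := by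
  rw [dedup_length_eq_card]
  have hset : ((UTree.sibseqs (B n n)).filter (fun w => 2 ≤ w.length)).toFinset
      = ((Finset.range n).image (fun j => C n (j+1)))
        ∪ ((Finset.range (n-1)).image (fun j => List.replicate (j+2) lf)) := by
    ext x
    simp only [List.mem_toFinset, List.mem_filter, UTree.sibseqs, List.mem_cons,
      mem_sibs_B hn, Finset.mem_union, Finset.mem_image, Finset.mem_range,
      decide_eq_true_eq]
    constructor
    · rintro ⟨rfl | ⟨j, h1, h2, rfl⟩ | ⟨j, h1, h2, rfl⟩, hlen⟩
      · simp at hlen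
      · exact Or.inl ⟨j - 1, by omega, by congr 1; omega⟩
      · have hj2 : 2 ≤ j := by simpa using hlen
        exact Or.inr ⟨j - 2, by omega, by congr 1; omega⟩
    · rintro (⟨j, hj, rfl⟩ | ⟨j, hj, rfl⟩)
      · refine ⟨Or.inr (Or.inl ⟨j+1, by omega, by omega, rfl⟩), ?_⟩
        rw [C_length]; omega
      · exact ⟨Or.inr (Or.inr ⟨j+2, by omega, by omega, rfl⟩), by simp⟩
  rw [hset, Finset.card_union_of_disjoint, Finset.card_image_of_injective _
      (fun a b h => by have := C_inj h; omega),
    Finset.card_image_of_injective _ (fun a b h => by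
      have := congrArg List.length h; simp at this; omega),
    Finset.card_range, Finset.card_range]
  · omega
  · rw [Finset.disjoint_left]
    rintro x hx hy
    simp only [Finset.mem_image, Finset.mem_range] at hx hy
    obtain ⟨j, _, rfl⟩ := hx
    obtain ⟨i, _, hi⟩ := hy
    exact C_ne_replicate hn hi.symm


/-- There is a family of trees `s n` (for `n ≥ 1`) with `|dag(s_n)| = 3n(n+1)/2` and
`|hdag(s_n)| = 3n`, so that `|dag(s_n)| > (1/6)|hdag(s_n)|²`. -/
theorem exists_family_dag_gt_sixth_hdag_sq :
    ∃ s : ℕ → UTree ℕ, ∀ n : ℕ, 1 ≤ n →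
      2 * UTree.dagEdges (s n) = 3 * n * (n + 1) ∧
      UTree.hdagEdges (s n) = 3 * n ∧
      UTree.hdagEdges (s n) ^ 2 < 6 * UTree.dagEdges (s n) := by
  refine ⟨fun n => B n n, fun n hn => ?_⟩
  have hdag := dag_value hn
  have hh : UTree.hdagEdges (B n n) = 3 * n := by
    rw [UTree.hdagEdges, hdag_part1 hn, hdag_part2 hn]; omega
  refine ⟨hdag, hh, ?_⟩
  rw [hh]
  nlinarith [hdag, hn]
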